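/- Let A be a linear subspace of F₂ⁿ and let R ⊆ F₂ⁿ contain exactly one representative of each coset of A, and R' ⊆ F₂ⁿ contain exactly one representative of each coset of A^⊥. Then the sum over s ∈ R and s' ∈ R' of the rank-one orthogonal projections onto the spans of the coset states |A_{s,s'}⟩ equals the identity operator on ℂ^{F₂ⁿ}; that is, Σ_{s ∈ R, s' ∈ R'} |A_{s,s'}⟩⟨A_{s,s'}| = I. -/

import Mathlib

open scoped Classical InnerProductSpace

/-- The vector space `F₂ⁿ`. -/
abbrev F2n (n : ℕ) := Fin n → ZMod 2

/-- The `F₂`-bilinear form `⟨x, y⟩ = Σᵢ xᵢ yᵢ` on `F₂ⁿ`. -/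
def bform {n : ℕ} (x y : F2n n) : ZMod 2 := ∑ i, x i * y i

/-- The sign `(−1)^b ∈ ℂ` attached to `b ∈ F₂`. -/
def sgn (b : ZMod 2) : ℂ := (-1 : ℂ) ^ b.val

/-- The dual subspace `A^⊥ = {b | ⟨a, b⟩ = 0 for all a ∈ A}`. -/
def dualSub {n : ℕ} (A : Submodule (ZMod 2) (F2n n)) : Submodule (ZMod 2) (F2n n) where
  carrier := {b | ∀ a ∈ A, bform a b = 0}
  add_mem' := by
    intro b c hb hc a ha
    have h : bform a (b + c) = bform a b + bform a c := by
      simp [bform, Pi.add_apply, mul_add, Finset.sum_add_distrib]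
    simp only [Set.mem_setOf_eq] at hb hc ⊢
    rw [h, hb a ha, hc a ha, add_zero]
  zero_mem' := by
    intro a _
    simp [bform]
  smul_mem' := by
    intro c x hx a ha
    have h : bform a (c • x) = c * bform a x := by
      simp only [bform, Finset.mul_sum, Pi.smul_apply, smul_eq_mul]
      exact Finset.sum_congr rfl fun i _ => by ring
    simp only [Set.mem_setOf_eq] at hx ⊢
    rw [h, hx a ha, mul_zero]

/-- The coset state `|A_{s,s'}⟩ = |A|^{−1/2} Σ_{a ∈ A} (−1)^{⟨s',a⟩} e_{a+s}`. -/
noncomputable def cosetState (n : ℕ) (A : Submodule (ZMod 2) (F2n n)) (s s' : F2n n) :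
    EuclideanSpace ℂ (F2n n) :=
  ((Real.sqrt (Nat.card A) : ℂ))⁻¹ •
    ∑ a ∈ (A : Set (F2n n)).toFinset,
      sgn (bform s' a) • EuclideanSpace.single (a + s) (1 : ℂ)

/-- The rank-one (orthogonal) projection `|v⟩⟨v| : x ↦ ⟨v, x⟩ • v`. -/
noncomputable def ketBra {n : ℕ} (v : EuclideanSpace ℂ (F2n n)) :
    EuclideanSpace ℂ (F2n n) →L[ℂ] EuclideanSpace ℂ (F2n n) :=
  (innerSL ℂ v).smulRight v

section Helpers

variable {n : ℕ}

lemma sgn_zero' : sgn 0 = 1 := by simp [sgn]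

lemma sgn_one' : sgn 1 = -1 := by simp [sgn, ZMod.val_one]

lemma sgn_add' (a b : ZMod 2) : sgn (a + b) = sgn a * sgn b := by
  rcases (by decide : ∀ x : ZMod 2, x = 0 ∨ x = 1) a with rfl | rfl <;>
    rcases (by decide : ∀ x : ZMod 2, x = 0 ∨ x = 1) b with rfl | rfl <;>
    norm_num [sgn_zero', sgn_one', show (1 + 1 : ZMod 2) = 0 from by decide,
      show sgn (2 : ZMod 2) = 1 from by rw [show (2 : ZMod 2) = 0 from by decide, sgn_zero']]

lemma conj_sgn' (a : ZMod 2) : (starRingEnd ℂ) (sgn a) = sgn a := by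
  fin_cases a <;> simp [sgn]

lemma bform_add_left' (x y b : F2n n) : bform (x + y) b = bform x b + bform y b := by
  simp [bform, add_mul, Finset.sum_add_distrib]

lemma bform_add_right' (b x y : F2n n) : bform b (x + y) = bform b x + bform b y := by
  simp [bform, mul_add, Finset.sum_add_distrib]

lemma bform_comm' (x y : F2n n) : bform x y = bform y x := by
  simp [bform, mul_comm]

lemma bform_single' (j : Fin n) (b : F2n n) : bform (Pi.single j 1) b = b j := by
  simp [bform, Pi.single_apply, ite_mul]

lemma F2n_add_self (x : F2n n) : x + x = 0 := by
  funext i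
  show x i + x i = 0
  have : ∀ a : ZMod 2, a + a = 0 := by decide
  exact this _

lemma sub_key (z x s : F2n n) : (z - s) + (x - s) = z - x := by
  have hx := F2n_add_self x
  have hs := F2n_add_self s
  linear_combination hx - hs

end Helpers
section Helpers2

variable {n : ℕ}

lemma mem_dualSub' {A : Submodule (ZMod 2) (F2n n)} {x : F2n n} :
    x ∈ dualSub A ↔ ∀ a ∈ A, bform a x = 0 := Iff.rfl

lemma sum_sgn_eq_zero {b : F2n n} (hb : b ≠ 0) :
    ∑ x : F2n n, sgn (bform x b) = 0 := by
  obtain ⟨j, hj⟩ : ∃ j, b j ≠ 0 := by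
    by_contra h; push_neg at h; exact hb (funext h)
  have hbj : b j = 1 := by
    have : ∀ a : ZMod 2, a ≠ 0 → a = 1 := by decide
    exact this _ hj
  have key : ∀ x : F2n n, sgn (bform (Pi.single j 1 + x) b) = - sgn (bform x b) := by
    intro x
    rw [bform_add_left', sgn_add', bform_single', hbj, sgn_one']
    ring
  have h1 : ∑ x : F2n n, sgn (bform x b)
      = ∑ x : F2n n, sgn (bform (Pi.single j 1 + x) b) :=
    Fintype.sum_equiv (Equiv.addLeft (Pi.single j 1)) _ _ (fun x => rfl) |>.symm
  have h2 : (∑ x : F2n n, sgn (bform x b)) + ∑ x : F2n n, sgn (bform x b) = 0 := by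
    nth_rewrite 1 [h1]
    rw [← Finset.sum_add_distrib]
    simp [key]
  exact add_self_eq_zero.mp h2

end Helpers2
section Helpers3

variable {n : ℕ}

/-- A full set of coset representatives of a subspace `W` has cardinality `2^n / |W|`. -/
lemma rep_card (W : Submodule (ZMod 2) (F2n n)) (S : Finset (F2n n))
    (hS : ∀ x : F2n n, ∃! r, r ∈ S ∧ x - r ∈ W) :
    S.card * Nat.card W = 2 ^ n := by
  classical
  set g : F2n n → F2n n := fun x => (hS x).choose with hg
  have hg1 : ∀ x, g x ∈ S ∧ x - g x ∈ W := fun x => (hS x).choose_spec.1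
  have hg2 : ∀ x r, r ∈ S → x - r ∈ W → r = g x := fun x r h1 h2 =>
    ((hS x).choose_spec.2 r ⟨h1, h2⟩)
  have hmaps : ∀ x ∈ (Finset.univ : Finset (F2n n)), g x ∈ S := fun x _ => (hg1 x).1
  have hcard := Finset.card_eq_sum_card_fiberwise hmaps
  have hfib : ∀ r ∈ S,
      (Finset.univ.filter (fun x => g x = r)).card = Nat.card W := by
    intro r hr
    have : Nat.card W = (W : Set (F2n n)).toFinset.card := by
      rw [Set.toFinset_card, Nat.card_eq_fintype_card]
      exact Fintype.card_congr (Equiv.refl _)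
    rw [this]
    apply Finset.card_bij (fun x _ => x - r)
    · intro x hx
      simp only [Finset.mem_filter] at hx
      rw [Set.mem_toFinset]
      rw [← hx.2] at hr ⊢
      exact (hg1 x).2
    · intro x hx y hy hxy
      have := sub_left_injective (G := F2n n) hxy
      exact this
    · intro c hc
      rw [Set.mem_toFinset] at hc
      refine ⟨r + c, ?_, by abel⟩
      simp only [Finset.mem_filter, Finset.mem_univ, true_and]
      refine (hg2 (r + c) r hr ?_).symm
      have : r + c - r = c := by abel
      rwa [this]
  rw [Finset.sum_congr rfl hfib, Finset.sum_const, smul_eq_mul] at hcard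
  rw [← hcard]
  have : Fintype.card (F2n n) = 2 ^ n := by
    rw [Fintype.card_fun]
    simp [ZMod.card]
  rw [Finset.card_univ, this]

end Helpers3
section Helpers4

variable {n : ℕ}

lemma bform_smul_left' (c : ZMod 2) (x y : F2n n) :
    bform (c • x) y = c * bform x y := by
  simp only [bform, Finset.mul_sum, Pi.smul_apply, smul_eq_mul]
  exact Finset.sum_congr rfl fun i _ => by ring

/-- The pairing map `F₂ⁿ →ₗ Dual A`. -/
noncomputable def pairDual (A : Submodule (ZMod 2) (F2n n)) :
    F2n n →ₗ[ZMod 2] Module.Dual (ZMod 2) A where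
  toFun x :=
    { toFun := fun a => bform a.1 x
      map_add' := fun a b => bform_add_left' a.1 b.1 x
      map_smul' := fun c a => bform_smul_left' c a.1 x }
  map_add' x y := by
    ext a
    exact bform_add_right' a.1 x y
  map_smul' c x := by
    ext a
    have : bform a.1 (c • x) = c * bform a.1 x := by
      rw [bform_comm' a.1 (c • x), bform_smul_left', bform_comm']
    simpa using this

lemma pairDual_surjective (A : Submodule (ZMod 2) (F2n n)) :
    Function.Surjective (pairDual A) := by
  intro f
  obtain ⟨g, hg⟩ := LinearMap.exists_extend f
  refine ⟨fun i => g (Pi.single i 1), ?_⟩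
  ext a
  show bform a.1 (fun i => g (Pi.single i 1)) = f a
  have h1 : bform a.1 (fun i => g (Pi.single i 1))
      = ∑ i, g (a.1 i • Pi.single i (1 : ZMod 2)) := by
    simp only [bform, map_smul, smul_eq_mul]
  rw [h1, ← map_sum]
  have h2 : (∑ i, a.1 i • Pi.single i (1 : ZMod 2)) = a.1 := by
    have := Finset.univ_sum_single (a.1 : F2n n)
    rw [← this]
    exact Finset.sum_congr rfl fun i _ => by
      ext k
      simp [Pi.single_apply, mul_comm]
  rw [h2]
  have := LinearMap.congr_fun hg a
  exact this

lemma ker_pairDual (A : Submodule (ZMod 2) (F2n n)) :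
    LinearMap.ker (pairDual A) = dualSub A := by
  ext x
  simp only [LinearMap.mem_ker, mem_dualSub']
  constructor
  · intro h a ha
    have := LinearMap.ext_iff.mp h ⟨a, ha⟩
    simpa [pairDual] using this
  · intro h
    ext a
    exact h a.1 a.2

lemma card_submodule (W : Submodule (ZMod 2) (F2n n)) :
    Nat.card W = 2 ^ Module.finrank (ZMod 2) W := by
  haveI : Fintype W := Fintype.ofFinite _
  rw [Nat.card_eq_fintype_card, Module.card_eq_pow_finrank (K := ZMod 2), ZMod.card]

lemma card_mul_card_dualSub (A : Submodule (ZMod 2) (F2n n)) :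
    Nat.card A * Nat.card (dualSub A) = 2 ^ n := by
  have hrk := LinearMap.finrank_range_add_finrank_ker (pairDual A)
  have hrange : LinearMap.range (pairDual A) = ⊤ :=
    LinearMap.range_eq_top.mpr (pairDual_surjective A)
  rw [hrange, ker_pairDual] at hrk
  have htop : Module.finrank (ZMod 2) (⊤ : Submodule (ZMod 2) (Module.Dual (ZMod 2) A))
      = Module.finrank (ZMod 2) A := by
    rw [finrank_top, Subspace.dual_finrank_eq]
  rw [htop, Module.finrank_fin_fun] at hrk
  rw [card_submodule, card_submodule, ← pow_add, hrk]

end Helpers4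
section Helpers5

variable {n : ℕ}

lemma cosetState_coord (A : Submodule (ZMod 2) (F2n n)) (s s' x : F2n n) :
    cosetState n A s s' x
      = ((Real.sqrt (Nat.card A) : ℂ))⁻¹ *
          (if x - s ∈ A then sgn (bform s' (x - s)) else 0) := by
  classical
  unfold cosetState
  have h0 : (((Real.sqrt (Nat.card A) : ℂ))⁻¹ •
      ∑ a ∈ (A : Set (F2n n)).toFinset,
        sgn (bform s' a) • EuclideanSpace.single (a + s) (1 : ℂ)) x
      = ((Real.sqrt (Nat.card A) : ℂ))⁻¹ *
        ∑ a ∈ (A : Set (F2n n)).toFinset,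
          sgn (bform s' a) * (EuclideanSpace.single (a + s) (1 : ℂ)) x := by
    have h1 := Finset.sum_apply x ((A : Set (F2n n)).toFinset)
      (fun a => sgn (bform s' a) • EuclideanSpace.single (a + s) (1 : ℂ))
    show ((Real.sqrt (Nat.card A) : ℂ))⁻¹ *
      (∑ a ∈ (A : Set (F2n n)).toFinset,
        sgn (bform s' a) • EuclideanSpace.single (a + s) (1 : ℂ)) x = _
    rw [WithLp.ofLp_sum, h1]
    rfl
  rw [h0]
  congr 1
  have h2 : ∀ a ∈ (A : Set (F2n n)).toFinset,
      sgn (bform s' a) * (EuclideanSpace.single (a + s) (1 : ℂ)) x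
      = if x - s = a then sgn (bform s' a) else 0 := by
    intro a _
    rw [EuclideanSpace.single_apply]
    have hcond : (x = a + s) ↔ (x - s = a) := sub_eq_iff_eq_add.symm
    by_cases h : x - s = a
    · rw [if_pos (hcond.mpr h), if_pos h, mul_one]
    · rw [if_neg (fun hh => h (hcond.mp hh)), if_neg h, mul_zero]
  rw [Finset.sum_congr rfl h2, Finset.sum_ite_eq]
  simp [Set.mem_toFinset]

lemma conj_cosetState (A : Submodule (ZMod 2) (F2n n)) (s s' x : F2n n) :
    (starRingEnd ℂ) (cosetState n A s s' x) = cosetState n A s s' x := by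
  rw [cosetState_coord, map_mul]
  congr 1
  · rw [map_inv₀, Complex.conj_ofReal]
  · by_cases h : x - s ∈ A
    · rw [if_pos h]
      exact conj_sgn' _
    · rw [if_neg h]
      exact map_zero _

lemma rep_sum (W : Submodule (ZMod 2) (F2n n)) (S : Finset (F2n n))
    (hS : ∀ x : F2n n, ∃! r, r ∈ S ∧ x - r ∈ W) (f : F2n n → ℂ)
    (hconst : ∀ x r, r ∈ S → x - r ∈ W → f x = f r) :
    ∑ x : F2n n, f x = (Nat.card W : ℂ) * ∑ r ∈ S, f r := by
  classical
  set g : F2n n → F2n n := fun x => (hS x).choose with hg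
  have hg1 : ∀ x, g x ∈ S ∧ x - g x ∈ W := fun x => (hS x).choose_spec.1
  have hg2 : ∀ x r, r ∈ S → x - r ∈ W → r = g x := fun x r h1 h2 =>
    ((hS x).choose_spec.2 r ⟨h1, h2⟩)
  have hmaps : ∀ x ∈ (Finset.univ : Finset (F2n n)), g x ∈ S := fun x _ => (hg1 x).1
  rw [← Finset.sum_fiberwise_of_maps_to hmaps f]
  have hfib : ∀ r ∈ S,
      ∑ x ∈ Finset.univ.filter (fun x => g x = r), f x = (Nat.card W : ℂ) * f r := by
    intro r hr
    have hval : ∀ x ∈ Finset.univ.filter (fun x => g x = r), f x = f r := by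
      intro x hx
      simp only [Finset.mem_filter] at hx
      exact hconst x r hr (hx.2 ▸ (hg1 x).2)
    rw [Finset.sum_congr rfl hval, Finset.sum_const, nsmul_eq_mul]
    congr 2
    -- fiber card = Nat.card W
    have hW : Nat.card W = (W : Set (F2n n)).toFinset.card := by
      rw [Set.toFinset_card, Nat.card_eq_fintype_card]
      exact Fintype.card_congr (Equiv.refl _)
    rw [hW]
    apply Finset.card_bij (fun x _ => x - r)
    · intro x hx
      simp only [Finset.mem_filter] at hx
      rw [Set.mem_toFinset, ← hx.2]
      exact (hg1 x).2
    · intro x hx y hy hxy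
      exact sub_left_injective (G := F2n n) hxy
    · intro c hc
      rw [Set.mem_toFinset] at hc
      refine ⟨r + c, ?_, by abel⟩
      simp only [Finset.mem_filter, Finset.mem_univ, true_and]
      refine (hg2 (r + c) r hr ?_).symm
      have hrc : r + c - r = c := by abel
      rwa [hrc]
  rw [Finset.sum_congr rfl hfib, ← Finset.mul_sum]

lemma sum_R'_sgn {A : Submodule (ZMod 2) (F2n n)} {R' : Finset (F2n n)}
    (hR' : ∀ x : F2n n, ∃! r, r ∈ R' ∧ x - r ∈ dualSub A) {b : F2n n} (hbA : b ∈ A) :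
    ∑ s' ∈ R', sgn (bform s' b) = if b = 0 then (R'.card : ℂ) else 0 := by
  by_cases hb : b = 0
  · subst hb
    have : ∀ s' : F2n n, sgn (bform s' 0) = 1 := by
      intro s'
      have : bform s' (0 : F2n n) = 0 := by simp [bform]
      rw [this, sgn_zero']
    rw [if_pos rfl, Finset.sum_congr rfl (fun s' _ => this s'), Finset.sum_const,
      nsmul_eq_mul, mul_one]
  · rw [if_neg hb]
    have hconst : ∀ x r, r ∈ R' → x - r ∈ dualSub A →
        sgn (bform x b) = sgn (bform r b) := by
      intro x r hr hxr
      have h1 : bform (x - r) b = 0 := by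
        rw [bform_comm']
        exact hxr b hbA
      have h2 : x = (x - r) + r := by abel
      rw [h2, bform_add_left', h1, zero_add]
    have := rep_sum (dualSub A) R' hR' (fun x => sgn (bform x b)) hconst
    rw [sum_sgn_eq_zero hb] at this
    have hcd : (Nat.card (dualSub A) : ℂ) ≠ 0 := by
      have : 0 < Nat.card (dualSub A) := Nat.card_pos
      exact_mod_cast this.ne'
    have := (mul_eq_zero.mp this.symm).resolve_left hcd
    exact this

end Helpers5
section Helpers6

variable {n : ℕ}

lemma key_sum {A : Submodule (ZMod 2) (F2n n)} {R R' : Finset (F2n n)}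
    (hR : ∀ x : F2n n, ∃! r, r ∈ R ∧ x - r ∈ A)
    (hR' : ∀ x : F2n n, ∃! r, r ∈ R' ∧ x - r ∈ dualSub A) (z x : F2n n) :
    ∑ s ∈ R, ∑ s' ∈ R',
      (starRingEnd ℂ) (cosetState n A s s' z) * cosetState n A s s' x
    = if z = x then 1 else 0 := by
  classical
  set c : ℂ := ((Real.sqrt (Nat.card A) : ℂ))⁻¹ with hc
  have hAcard : 0 < Nat.card A := Nat.card_pos
  have hcR' : R'.card = Nat.card A := by
    have h1 := rep_card (dualSub A) R' hR'
    have h2 := card_mul_card_dualSub A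
    have hd : 0 < Nat.card (dualSub A) := Nat.card_pos
    exact Nat.eq_of_mul_eq_mul_right hd (h1.trans h2.symm)
  have hc2 : c * c * ((R'.card : ℕ) : ℂ) = 1 := by
    have hcast : ((R'.card : ℕ) : ℂ) = ((Nat.card A : ℕ) : ℂ) := by exact_mod_cast hcR'
    rw [hcast, hc, ← mul_inv, ← Complex.ofReal_mul,
      Real.mul_self_sqrt (by positivity)]
    rw [Complex.ofReal_natCast, inv_mul_cancel₀]
    exact_mod_cast hAcard.ne'
  have hs : ∀ s ∈ R, (∑ s' ∈ R',
      (starRingEnd ℂ) (cosetState n A s s' z) * cosetState n A s s' x)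
      = if z - s ∈ A ∧ x - s ∈ A ∧ z = x then c * c * (R'.card : ℂ) else 0 := by
    intro s _
    by_cases h1 : z - s ∈ A
    · by_cases h2 : x - s ∈ A
      · have hterm : ∀ s' : F2n n,
            (starRingEnd ℂ) (cosetState n A s s' z) * cosetState n A s s' x
            = c * c * sgn (bform s' (z - x)) := by
          intro s'
          rw [conj_cosetState, cosetState_coord, cosetState_coord, if_pos h1, if_pos h2]
          have hsgn : sgn (bform s' (z - s)) * sgn (bform s' (x - s))
              = sgn (bform s' (z - x)) := by
            rw [← sgn_add', ← bform_add_right', sub_key]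
          calc (c * sgn (bform s' (z - s))) * (c * sgn (bform s' (x - s)))
              = c * c * (sgn (bform s' (z - s)) * sgn (bform s' (x - s))) := by ring
            _ = c * c * sgn (bform s' (z - x)) := by rw [hsgn]
        rw [Finset.sum_congr rfl (fun s' _ => hterm s'), ← Finset.mul_sum]
        have hzxA : z - x ∈ A := by
          have := A.add_mem h1 h2
          rwa [sub_key] at this
        rw [sum_R'_sgn hR' hzxA, mul_ite, mul_zero]
        simp [h1, h2, sub_eq_zero]
      · have hterm : ∀ s' : F2n n,
            (starRingEnd ℂ) (cosetState n A s s' z) * cosetState n A s s' x = 0 := by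
          intro s'
          rw [cosetState_coord A s s' x, if_neg h2, mul_zero, mul_zero]
        rw [Finset.sum_congr rfl (fun s' _ => hterm s'), Finset.sum_const, smul_zero]
        simp [h2]
    · have hterm : ∀ s' : F2n n,
          (starRingEnd ℂ) (cosetState n A s s' z) * cosetState n A s s' x = 0 := by
        intro s'
        rw [conj_cosetState, cosetState_coord A s s' z, if_neg h1, mul_zero, zero_mul]
      rw [Finset.sum_congr rfl (fun s' _ => hterm s'), Finset.sum_const, smul_zero]
      simp [h1]
  rw [Finset.sum_congr rfl hs]
  by_cases hzx : z = x
  · subst hzx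
    obtain ⟨r, ⟨hrR, hrA⟩, huniq⟩ := hR z
    rw [Finset.sum_eq_single_of_mem r hrR]
    · rw [if_pos ⟨hrA, hrA, rfl⟩, if_pos rfl, hc2]
    · intro s hsR hsne
      rw [if_neg]
      rintro ⟨hA1, -, -⟩
      exact hsne (huniq s ⟨hsR, hA1⟩)
  · have hall : ∀ s ∈ R,
        (if z - s ∈ A ∧ x - s ∈ A ∧ z = x then c * c * (R'.card : ℂ) else 0) = 0 := by
      intro s _
      rw [if_neg]
      rintro ⟨-, -, h⟩
      exact hzx h
    rw [Finset.sum_congr rfl hall, Finset.sum_const, smul_zero, if_neg hzx]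

end Helpers6
/-- **Resolution of the identity by coset states.** If `R` (resp. `R'`) contains exactly one
representative of each coset of `A` (resp. of `A^⊥`), then
`Σ_{s ∈ R, s' ∈ R'} |A_{s,s'}⟩⟨A_{s,s'}| = I`. -/
theorem cosetState_resolution_of_identity (n : ℕ) (A : Submodule (ZMod 2) (F2n n))
    (R R' : Finset (F2n n))
    (hR : ∀ x : F2n n, ∃! r, r ∈ R ∧ x - r ∈ A)
    (hR' : ∀ x : F2n n, ∃! r, r ∈ R' ∧ x - r ∈ dualSub A) :
    ∑ s ∈ R, ∑ s' ∈ R', ketBra (cosetState n A s s')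
      = ContinuousLinearMap.id ℂ (EuclideanSpace ℂ (F2n n)) := by
  apply ContinuousLinearMap.ext
  intro y
  apply PiLp.ext
  intro x
  show (∑ s ∈ R, ∑ s' ∈ R', ketBra (cosetState n A s s')) y x = y x
  have e1 : (∑ s ∈ R, ∑ s' ∈ R', ketBra (cosetState n A s s')) y
      = ∑ s ∈ R, ∑ s' ∈ R', (ketBra (cosetState n A s s')) y := by
    rw [ContinuousLinearMap.sum_apply]
    exact Finset.sum_congr rfl fun s _ => ContinuousLinearMap.sum_apply _ _ _
  rw [e1]
  have e2 : (∑ s ∈ R, ∑ s' ∈ R', (ketBra (cosetState n A s s')) y) x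
      = ∑ s ∈ R, ∑ s' ∈ R', ((ketBra (cosetState n A s s')) y) x := by
    rw [WithLp.ofLp_sum, Finset.sum_apply]
    exact Finset.sum_congr rfl fun s _ => by rw [WithLp.ofLp_sum, Finset.sum_apply]
  rw [e2]
  have e3 : ∀ s s' : F2n n, ((ketBra (cosetState n A s s')) y) x
      = ∑ z : F2n n,
          ((starRingEnd ℂ) (cosetState n A s s' z) * cosetState n A s s' x) * y z := by
    intro s s'
    have h0 : ((ketBra (cosetState n A s s')) y) x
        = ⟪cosetState n A s s', y⟫_ℂ * cosetState n A s s' x := rfl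
    have hinner : ⟪cosetState n A s s', y⟫_ℂ
        = ∑ z : F2n n, (starRingEnd ℂ) (cosetState n A s s' z) * y z := by
      simp [PiLp.inner_apply, RCLike.inner_apply]
      exact Finset.sum_congr rfl fun _ _ => mul_comm _ _
    rw [h0, hinner, Finset.sum_mul]
    exact Finset.sum_congr rfl fun z _ => by ring
  rw [Finset.sum_congr rfl fun s _ => Finset.sum_congr rfl fun s' _ => e3 s s']
  rw [Finset.sum_congr rfl fun s (_ : s ∈ R) =>
    Finset.sum_comm (s := R') (t := Finset.univ)
      (f := fun s' z => ((starRingEnd ℂ) (cosetState n A s s' z) * cosetState n A s s' x) * y z)]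
  rw [Finset.sum_comm (s := R) (t := Finset.univ)]
  have e4 : ∀ z : F2n n,
      (∑ s ∈ R, ∑ s' ∈ R',
        ((starRingEnd ℂ) (cosetState n A s s' z) * cosetState n A s s' x) * y z)
      = (if z = x then 1 else 0) * y z := by
    intro z
    rw [← key_sum hR hR' z x, Finset.sum_mul]
    exact Finset.sum_congr rfl fun s _ => (Finset.sum_mul _ _ _).symm
  rw [Finset.sum_congr rfl fun z _ => e4 z]
  simp
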